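/- Let α₀, α₁ ∈ ℂ with 2α₀ + α₁ = 1, U ⊆ ℂ open, and let (x, y, z, w, q) be differentiable functions on U solving system (11), with y(t) ≠ 0 for all t ∈ U. Then the functions (x − 9α₁ w/y + (162/4)α₁² q/y² − (243/2)α₁³ z/y³ − (729/8)α₁⁴/y⁴, y, z + 3α₁/y, w − 9α₁ q/y + (81/2)α₁² z/y² + (81/2)α₁³/y³, q − 9α₁ z/y − (27/2)α₁²/y²) solve system (11) with parameters (α₀ + α₁, −α₁) on U. (This is the Bäcklund transformation s₁ of the affine Weyl group of type A₂^(2).) -/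

import Mathlib

/-- `(x,y,z,w,q)` solves system (11) with parameters `α₀, α₁` on `U`:
`x' = -2xz - 3α₀`, `y' = yz + (3/2)α₁`, `z' = z² + q`,
`w' = -zw + (2/3)x + (1/3)y`, `q' = w`. -/
def SolvesSys11 (a0 a1 : ℂ) (U : Set ℂ) (x y z w q : ℂ → ℂ) : Prop :=
  ∀ t ∈ U,
    HasDerivAt x (-2 * x t * z t - 3 * a0) t ∧
    HasDerivAt y (y t * z t + (3/2) * a1) t ∧
    HasDerivAt z (z t ^ 2 + q t) t ∧
    HasDerivAt w (-(z t) * w t + (2/3) * x t + (1/3) * y t) t ∧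
    HasDerivAt q (w t) t

set_option maxHeartbeats 2000000 in
/-- The Bäcklund transformation `s₁` of the affine Weyl group of
type `A₂⁽²⁾`: if `(x,y,z,w,q)` solves system (11) with parameters `(α₀,α₁)`,
`2α₀ + α₁ = 1`, and `y ≠ 0` on `U`, then the transformed tuple solves system (11)
with parameters `(α₀ + α₁, -α₁)`. -/
theorem stmt6 (a0 a1 : ℂ) (hrel : 2 * a0 + a1 = 1) (U : Set ℂ) (hU : IsOpen U)
    (x y z w q : ℂ → ℂ) (h : SolvesSys11 a0 a1 U x y z w q)
    (hy : ∀ t ∈ U, y t ≠ 0) :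
    SolvesSys11 (a0 + a1) (-a1) U
      (fun t => x t - 9 * a1 * w t / y t + (162/4) * a1 ^ 2 * q t / y t ^ 2
        - (243/2) * a1 ^ 3 * z t / y t ^ 3 - (729/8) * a1 ^ 4 / y t ^ 4)
      y
      (fun t => z t + 3 * a1 / y t)
      (fun t => w t - 9 * a1 * q t / y t + (81/2) * a1 ^ 2 * z t / y t ^ 2
        + (81/2) * a1 ^ 3 / y t ^ 3)
      (fun t => q t - 9 * a1 * z t / y t - (27/2) * a1 ^ 2 / y t ^ 2) := by
  have ha0 : a0 = (1 - a1) / 2 := by linear_combination hrel / 2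
  subst ha0
  intro t ht
  obtain ⟨hx, hyd, hz, hw, hq⟩ := h t ht
  have hyt := hy t ht
  have hy2 : y t ^ 2 ≠ 0 := pow_ne_zero 2 hyt
  have hy3 : y t ^ 3 ≠ 0 := pow_ne_zero 3 hyt
  have hy4 : y t ^ 4 ≠ 0 := pow_ne_zero 4 hyt
  have hinv : y t * (y t)⁻¹ = 1 := mul_inv_cancel₀ hyt
  refine ⟨?_, ?_, ?_, ?_, ?_⟩
  · have H := (((hx.sub (((hw.const_mul (9 * a1))).div hyd hyt)).add
      (((hq.const_mul ((162/4) * a1 ^ 2))).div (hyd.pow 2) hy2)).sub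
      (((hz.const_mul ((243/2) * a1 ^ 3))).div (hyd.pow 3) hy3)).sub
      ((hasDerivAt_const t ((729/8) * a1 ^ 4)).div (hyd.pow 4) hy4)
    convert H using 1 <;> try rfl
    push_cast [Pi.pow_apply]
    linear_combination (3 * a1 + (-18) * a1 * (y t)⁻¹ * z t * w t + 6 * a1 * (y t)⁻¹ * x t + 3 * a1 * y t * (y t)⁻¹ + ((-81/2)) * a1 ^ 2 * (y t)⁻¹ ^ 2 * w t + 81 * a1 ^ 2 * (y t)⁻¹ ^ 2 * z t * q t + ((-81/2)) * a1 ^ 2 * y t * (y t)⁻¹ ^ 3 * w t + 81 * a1 ^ 2 * y t * (y t)⁻¹ ^ 3 * z t * q t + 243 * a1 ^ 3 * (y t)⁻¹ ^ 3 * q t + (-243) * a1 ^ 3 * (y t)⁻¹ ^ 3 * z t ^ 2 + ((243/2)) * a1 ^ 3 * y t * (y t)⁻¹ ^ 4 * q t + (-243) * a1 ^ 3 * y t * (y t)⁻¹ ^ 4 * z t ^ 2 + ((243/2)) * a1 ^ 3 * y t ^ 2 * (y t)⁻¹ ^ 5 * q t + (-243) * a1 ^ 3 * y t ^ 2 * (y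 t)⁻¹ ^ 5 * z t ^ 2 + ((-3645/4)) * a1 ^ 4 * (y t)⁻¹ ^ 4 * z t + ((-3645/4)) * a1 ^ 4 * y t * (y t)⁻¹ ^ 5 * z t + ((-729/2)) * a1 ^ 4 * y t ^ 2 * (y t)⁻¹ ^ 6 * z t + ((-729/2)) * a1 ^ 4 * y t ^ 3 * (y t)⁻¹ ^ 7 * z t + ((-2187/4)) * a1 ^ 5 * (y t)⁻¹ ^ 5 + ((-2187/4)) * a1 ^ 5 * y t * (y t)⁻¹ ^ 6 + ((-2187/4)) * a1 ^ 5 * y t ^ 2 * (y t)⁻¹ ^ 7) * hinv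
  · convert hyd using 1
    linear_combination (3 * a1) * hinv
  · have H := hz.add ((hasDerivAt_const t (3 * a1)).div hyd hyt)
    convert H using 1 <;> try rfl
    linear_combination (3 * a1 * (y t)⁻¹ * z t) * hinv
  · have H := ((hw.sub (((hq.const_mul (9 * a1))).div hyd hyt)).add
      (((hz.const_mul ((81/2) * a1 ^ 2))).div (hyd.pow 2) hy2)).add
      ((hasDerivAt_const t ((81/2) * a1 ^ 3)).div (hyd.pow 3) hy3)
    convert H using 1 <;> try rfl
    push_cast [Pi.pow_apply]
    linear_combination (9 * a1 * (y t)⁻¹ * w t + (-9) * a1 * (y t)⁻¹ * z t * q t + ((-81/2)) * a1 ^ 2 * (y t)⁻¹ ^ 2 * q t + ((81/2)) * a1 ^ 2 * (y t)⁻¹ ^ 2 * z t ^ 2 + ((-81/2)) * a1 ^ 2 * y t * (y t)⁻¹ ^ 3 * q t + ((81/2)) * a1 ^ 2 * y t * (y t)⁻¹ ^ 3 * z t ^ 2 + 243 * a1 ^ 3 * (y t)⁻¹ ^ 3 * z t + ((243/2)) * a1 ^ 3 * y t * (y t)⁻¹ ^ 4 * z t + ((243/2)) * a1 ^ 3 *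 y t ^ 2 * (y t)⁻¹ ^ 5 * z t + ((729/4)) * a1 ^ 4 * (y t)⁻¹ ^ 4 + ((729/4)) * a1 ^ 4 * y t * (y t)⁻¹ ^ 5) * hinv
  · have H := (hq.sub (((hz.const_mul (9 * a1))).div hyd hyt)).sub
      ((hasDerivAt_const t ((27/2) * a1 ^ 2)).div (hyd.pow 2) hy2)
    convert H using 1 <;> try rfl
    push_cast [Pi.pow_apply]
    linear_combination (9 * a1 * (y t)⁻¹ * q t + (-27) * a1 ^ 2 * (y t)⁻¹ ^ 2 * z t + (-27) * a1 ^ 2 * y t * (y t)⁻¹ ^ 3 * z t + ((-81/2)) * a1 ^ 3 * (y t)⁻¹ ^ 3) * hinv
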